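/- Let H be a real Hilbert space and B : H → H be (1/β)-cocoercive with β > 0. Then the resolvent J_B = (Id + B)^{-1} is (β/(2(1+β)))-averaged, i.e., for all x, y ∈ H: (2 − β/(1+β))⟨J_Bx − J_By, x − y⟩ ≥ (1 − β/(1+β))‖x − y‖² + ‖J_Bx − J_By‖². -/
import Mathlib


open RealInnerProductSpace

theorem resolvent_of_cocoercive_averaged
    {H : Type*} [NormedAddCommGroup H] [InnerProductSpace ℝ H]
    (β : ℝ) (hβ : 0 < β) (B J : H → H)
    (hB : ∀ x y : H, ⟪B x - B y, x - y⟫ ≥ (1 / β) * ‖B x - B y‖ ^ 2)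
    (hJ : ∀ x : H, J x + B (J x) = x) :
    ∀ x y : H,
      (2 - β / (1 + β)) * ⟪J x - J y, x - y⟫ ≥
        (1 - β / (1 + β)) * ‖x - y‖ ^ 2 + ‖J x - J y‖ ^ 2 := by
  intro x y
  have h1 : (0:ℝ) < 1 + β := by linarith
  have key := hB (J x) (J y)
  have hkey : β * ⟪B (J x) - B (J y), J x - J y⟫ ≥ ‖B (J x) - B (J y)‖ ^ 2 := by
    have := mul_le_mul_of_nonneg_left key hβ.le
    calc ‖B (J x) - B (J y)‖ ^ 2 = β * ((1/β) * ‖B (J x) - B (J y)‖ ^ 2) := by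
          field_simp
      _ ≤ β * ⟪B (J x) - B (J y), J x - J y⟫ := this
  have hxy : x - y = (J x - J y) + (B (J x) - B (J y)) := by
    conv_lhs => rw [← hJ x, ← hJ y]
    abel
  rw [hxy, inner_add_right, norm_add_sq_real, real_inner_self_eq_norm_sq,
    real_inner_comm (B (J x) - B (J y)) (J x - J y)]
  set a := ⟪B (J x) - B (J y), J x - J y⟫
  set b := ‖B (J x) - B (J y)‖
  set c := ‖J x - J y‖
  rw [ge_iff_le, ← sub_nonneg]
  have : (2 - β / (1 + β)) * (c ^ 2 + a) -
      ((1 - β / (1 + β)) * (c ^ 2 + 2 * a + b ^ 2) + c ^ 2)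
      = (1 / (1 + β)) * (β * a - b ^ 2) := by
    field_simp; ring
  rw [this]
  exact mul_nonneg (by positivity) (by linarith [hkey])
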